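/- arXiv:1601.03659 — 2 statements merged into one kernel-verified Lean document; each statement's English description precedes it below -/
import Mathlib

section
/- Let G be a D-regular graph on N vertices and let λ be the minimum eigenvalue of its adjacency matrix. Then for every subset S of vertices, the number of edges of G induced on S satisfies e(G[S]) ≥ (D/(2N))|S|² + (λ/(2N))|S|(N − |S|). -/
open Module


section Helpers
variable {N : ℕ}

private lemma transfer_eig (A : Matrix (Fin N) (Fin N) ℝ) (μ : ℝ)
    (h : Module.End.HasEigenvalue (Matrix.toEuclideanLin A) μ) :
    Module.End.HasEigenvalue (Matrix.toLin' A) μ := by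
  obtain ⟨v, hv⟩ := h.exists_hasEigenvector
  refine Module.End.hasEigenvalue_of_hasEigenvector (x := (WithLp.equiv 2 (Fin N → ℝ)) v) ⟨?_, ?_⟩
  · rw [Module.End.mem_eigenspace_iff]
    have := Module.End.mem_eigenspace_iff.mp hv.1
    rw [Matrix.toEuclideanLin_apply] at this
    have h2 := congrArg (WithLp.equiv 2 (Fin N → ℝ)) this
    simpa [Matrix.toLin'_apply] using h2
  · simpa using hv.2

private lemma rayleigh_lower (hN : 0 < N) (A : Matrix (Fin N) (Fin N) ℝ)
    (hA : A.IsHermitian) (lam : ℝ)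
    (hmin : ∀ μ : ℝ, Module.End.HasEigenvalue (Matrix.toLin' A) μ → lam ≤ μ)
    (x : EuclideanSpace ℝ (Fin N)) :
    lam * ‖x‖ ^ 2 ≤ inner ℝ (Matrix.toEuclideanLin A x) x := by
  set T := Matrix.toEuclideanLin A with hT
  have hsym : T.IsSymmetric := Matrix.isHermitian_iff_isSymmetric.mp hA
  haveI : Nonempty (Fin N) := ⟨⟨0, hN⟩⟩
  haveI : Nontrivial (EuclideanSpace ℝ (Fin N)) := inferInstance
  have hinf := hsym.hasEigenvalue_iInf_of_finiteDimensional
  have hlam : lam ≤ (⨅ z : {z : EuclideanSpace ℝ (Fin N) // z ≠ 0},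
      RCLike.re (inner ℝ (T z) (z : EuclideanSpace ℝ (Fin N)) : ℝ) / ‖(z : EuclideanSpace ℝ (Fin N))‖ ^ 2) :=
    hmin _ (transfer_eig A _ (by exact_mod_cast hinf))
  rcases eq_or_ne x 0 with rfl | hx
  · simp
  · set Tc := LinearMap.toContinuousLinearMap T with hTc
    have hbdd : BddBelow (Set.range fun z : {z : EuclideanSpace ℝ (Fin N) // z ≠ 0} =>
        RCLike.re (inner ℝ (T z) (z : EuclideanSpace ℝ (Fin N)) : ℝ) / ‖(z : EuclideanSpace ℝ (Fin N))‖ ^ 2) := by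
      refine ⟨-‖Tc‖, ?_⟩
      rintro r ⟨z, rfl⟩
      have hz : (0:ℝ) < ‖(z : EuclideanSpace ℝ (Fin N))‖ ^ 2 :=
        pow_pos (norm_pos_iff.mpr z.2) 2
      rw [le_div_iff₀ hz]
      have h1 : |(inner ℝ (T z) (z : EuclideanSpace ℝ (Fin N)) : ℝ)| ≤ ‖Tc‖ * ‖(z : EuclideanSpace ℝ (Fin N))‖ ^ 2 := by
        calc |(inner ℝ (T z) (z : EuclideanSpace ℝ (Fin N)) : ℝ)|
            ≤ ‖T z‖ * ‖(z : EuclideanSpace ℝ (Fin N))‖ := abs_real_inner_le_norm _ _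
          _ ≤ ‖Tc‖ * ‖(z : EuclideanSpace ℝ (Fin N))‖ * ‖(z : EuclideanSpace ℝ (Fin N))‖ := by
              gcongr; exact Tc.le_opNorm _
          _ = ‖Tc‖ * ‖(z : EuclideanSpace ℝ (Fin N))‖ ^ 2 := by ring
      have := neg_abs_le (inner ℝ (T z) (z : EuclideanSpace ℝ (Fin N)) : ℝ)
      simp only [RCLike.re_to_real]
      nlinarith [abs_nonneg (inner ℝ (T z) (z : EuclideanSpace ℝ (Fin N)) : ℝ)]
    have hle : (⨅ z : {z : EuclideanSpace ℝ (Fin N) // z ≠ 0},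
        RCLike.re (inner ℝ (T z) (z : EuclideanSpace ℝ (Fin N)) : ℝ) / ‖(z : EuclideanSpace ℝ (Fin N))‖ ^ 2)
        ≤ RCLike.re (inner ℝ (T x) x : ℝ) / ‖x‖ ^ 2 := ciInf_le hbdd ⟨x, hx⟩
    have hx2 : (0:ℝ) < ‖x‖ ^ 2 := pow_pos (norm_pos_iff.mpr hx) 2
    have := le_trans hlam hle
    rw [le_div_iff₀ hx2] at this
    simpa [mul_comm, RCLike.re_to_real] using this

private lemma rayleigh_mulVec (hN : 0 < N) (A : Matrix (Fin N) (Fin N) ℝ)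
    (hA : A.IsHermitian) (lam : ℝ)
    (hmin : ∀ μ : ℝ, Module.End.HasEigenvalue (Matrix.toLin' A) μ → lam ≤ μ)
    (x : Fin N → ℝ) :
    lam * (∑ i, x i * x i) ≤ ∑ i, (A.mulVec x) i * x i := by
  have h := rayleigh_lower hN A hA lam hmin ((WithLp.equiv 2 (Fin N → ℝ)).symm x)
  set x' : EuclideanSpace ℝ (Fin N) := (WithLp.equiv 2 (Fin N → ℝ)).symm x with hx'
  have h1 : (inner ℝ (Matrix.toEuclideanLin A x') x' : ℝ) = ∑ i, (A.mulVec x) i * x i := by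
    rw [Matrix.toEuclideanLin_apply]
    simp [PiLp.inner_apply, x', mul_comm]
  have h2 : ‖x'‖ ^ 2 = ∑ i, x i * x i := by
    rw [EuclideanSpace.norm_eq, Real.sq_sqrt (by positivity)]
    simp [x', Real.norm_eq_abs, sq_abs, sq]
  rw [h1] at h
  rw [h2] at h
  exact h

private def inducedOn (G : SimpleGraph (Fin N)) (S : Finset (Fin N)) : SimpleGraph (Fin N) where
  Adj a b := G.Adj a b ∧ a ∈ S ∧ b ∈ S
  symm := ⟨fun a b ⟨h, ha, hb⟩ => ⟨h.symm, hb, ha⟩⟩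
  loopless := ⟨fun a ⟨h, _, _⟩ => G.irrefl h⟩

private instance (G : SimpleGraph (Fin N)) [DecidableRel G.Adj] (S : Finset (Fin N)) :
    DecidableRel (inducedOn G S).Adj := fun a b => inferInstanceAs (Decidable (G.Adj a b ∧ a ∈ S ∧ b ∈ S))

private lemma count_lemma (G : SimpleGraph (Fin N)) [DecidableRel G.Adj] (S : Finset (Fin N)) :
    ∑ i ∈ S, ∑ j ∈ S, (G.adjMatrix ℝ) i j =
      2 * (({e ∈ G.edgeSet | ∀ v ∈ e, v ∈ (S : Set (Fin N))}.ncard : ℝ)) := by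
  have hset : {e ∈ G.edgeSet | ∀ v ∈ e, v ∈ (S : Set (Fin N))} =
      ((inducedOn G S).edgeFinset : Set (Sym2 (Fin N))) := by
    ext e
    refine Sym2.ind (fun a b => ?_) e
    simp only [Set.mem_setOf_eq, SimpleGraph.mem_edgeSet, Finset.coe_sort_coe,
      SimpleGraph.coe_edgeFinset, SimpleGraph.mem_edgeSet, Sym2.mem_iff, Finset.mem_coe]
    constructor
    · rintro ⟨hadj, hmem⟩
      exact ⟨hadj, hmem a (by simp), hmem b (by simp)⟩
    · rintro ⟨hadj, ha, hb⟩
      exact ⟨hadj, by rintro v (rfl | rfl) <;> assumption⟩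
  rw [hset, Set.ncard_coe_finset]
  have h2 := SimpleGraph.two_mul_card_edgeFinset (inducedOn G S)
  have hcard : ((Finset.univ.filter fun (x : Fin N × Fin N) => (inducedOn G S).Adj x.1 x.2).card : ℝ)
      = ∑ i ∈ S, ∑ j ∈ S, (G.adjMatrix ℝ) i j := by
    rw [Finset.card_filter]
    push_cast
    rw [Fintype.sum_prod_type]
    have : ∀ i j : Fin N, (if (inducedOn G S).Adj i j then (1:ℝ) else 0) =
        (if i ∈ S then (if j ∈ S then (G.adjMatrix ℝ) i j else 0) else 0) := by
      intro i j
      show (if (G.Adj i j ∧ i ∈ S ∧ j ∈ S) then (1:ℝ) else 0) = _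
      rcases Classical.em (G.Adj i j) with h1|h1 <;> rcases Classical.em (i ∈ S) with h2|h2 <;>
        rcases Classical.em (j ∈ S) with h3|h3 <;>
        simp [SimpleGraph.adjMatrix_apply, h1, h2, h3]
    dsimp only
    simp_rw [this]
    simp
  have h2' : (2 : ℝ) * ((inducedOn G S).edgeFinset.card : ℝ)
      = ∑ i ∈ S, ∑ j ∈ S, (G.adjMatrix ℝ) i j := by
    rw [← hcard]; exact_mod_cast congrArg (Nat.cast (R := ℝ)) h2
  linarith

end Helpers


/-- Expander Mixing Lemma (lower bound form): if `G` is a `D`-regular graph on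
`N` vertices and `lam` is the smallest eigenvalue of its adjacency matrix, then
for every vertex set `S`, the number of edges induced on `S` is at least
`(D/(2N))|S|² + (lam/(2N))|S|(N − |S|)`. -/
theorem expander_mixing_lower (N D : ℕ) (G : SimpleGraph (Fin N))
    [DecidableRel G.Adj]
    (hreg : ∀ v, G.degree v = D) (lam : ℝ)
    (heig : Module.End.HasEigenvalue (Matrix.toLin' (G.adjMatrix ℝ)) lam)
    (hmin : ∀ μ : ℝ, Module.End.HasEigenvalue (Matrix.toLin' (G.adjMatrix ℝ)) μ →
      lam ≤ μ)
    (S : Finset (Fin N)) :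
    (({e ∈ G.edgeSet | ∀ v ∈ e, v ∈ (S : Set (Fin N))}.ncard : ℝ)) ≥
      (D : ℝ) / (2 * N) * (S.card : ℝ) ^ 2 +
        lam / (2 * N) * (S.card : ℝ) * ((N : ℝ) - S.card) := by
  rcases Nat.eq_zero_or_pos N with rfl | hN
  · have hS : S = ∅ := Finset.eq_empty_of_isEmpty S
    subst hS
    simp
  -- setup
  set A := G.adjMatrix ℝ with hAdef
  have hA : A.IsHermitian := by
    rw [Matrix.IsHermitian, Matrix.conjTranspose_eq_transpose_of_trivial]
    exact G.isSymm_adjMatrix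
  set n : ℝ := (N : ℝ) with hn_def
  set s : ℝ := (S.card : ℝ) with hs_def
  have hn : (0:ℝ) < n := by rw [hn_def]; exact_mod_cast hN
  have hn' : n ≠ 0 := ne_of_gt hn
  set E : ℝ := (({e ∈ G.edgeSet | ∀ v ∈ e, v ∈ (S : Set (Fin N))}.ncard : ℝ)) with hE_def
  set x : Fin N → ℝ := fun i => if i ∈ S then 1 else 0 with hx_def
  set y : Fin N → ℝ := fun i => x i - s / n with hy_def
  -- basic sums
  have hx1 : ∑ i, x i = s := by
    simp [hx_def, hs_def]
  have hx2 : ∑ i, x i * x i = s := by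
    have : ∀ i, x i * x i = x i := by
      intro i; simp only [hx_def]; split_ifs <;> ring
    rw [Finset.sum_congr rfl fun i _ => this i, hx1]
  have hrow : ∀ i, ∑ j, A i j = (D:ℝ) := by
    intro i
    have : ∑ j, A i j = ((G.degree i : ℕ) : ℝ) := by
      simp [hAdef, SimpleGraph.adjMatrix_apply, Finset.sum_boole,
        SimpleGraph.degree, SimpleGraph.neighborFinset_eq_filter]
    rw [this, hreg]
  have hcol : ∀ j, ∑ i, A i j = (D:ℝ) := by
    intro j
    have : ∀ i, A i j = A j i := by
      intro i; simp only [hAdef, SimpleGraph.adjMatrix_apply]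
      rcases Classical.em (G.Adj i j) with h|h
      · simp [h, h.symm]
      · have h' : ¬ G.Adj j i := fun h' => h h'.symm
        simp [h, h']
    rw [Finset.sum_congr rfl fun i _ => this i]
    exact hrow j
  have hAx : ∀ i, (A.mulVec x) i = ∑ j ∈ S, A i j := by
    intro i
    simp only [Matrix.mulVec, dotProduct, hx_def, mul_ite, mul_one, mul_zero]
    simp
  have hQ : ∑ i, (A.mulVec x) i * x i = ∑ i ∈ S, ∑ j ∈ S, A i j := by
    have : ∀ i, (A.mulVec x) i * x i = if i ∈ S then ∑ j ∈ S, A i j else 0 := by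
      intro i; rw [hAx]; simp only [hx_def]; split_ifs <;> ring
    rw [Finset.sum_congr rfl fun i _ => this i]
    simp
  have hsumAx : ∑ i, (A.mulVec x) i = (D:ℝ) * s := by
    rw [Finset.sum_congr rfl fun i _ => hAx i, Finset.sum_comm (f := fun i j => A i j)]
    rw [Finset.sum_congr rfl fun j _ => hcol j]
    simp [hs_def, mul_comm]
  -- apply Rayleigh to y
  have hray := rayleigh_mulVec hN A hA lam hmin y
  have hAy : ∀ i, (A.mulVec y) i = (A.mulVec x) i - s / n * D := by
    intro i
    simp only [Matrix.mulVec, dotProduct, hy_def, mul_sub, Finset.sum_sub_distrib]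
    rw [← Finset.sum_mul, hrow]
    ring
  have hyy : ∑ i, y i * y i = s - s^2/n := by
    have : ∀ i, y i * y i = x i * x i - 2*(s/n)*x i + (s/n)^2 := by
      intro i; simp only [hy_def]; ring
    rw [Finset.sum_congr rfl fun i _ => this i]
    rw [Finset.sum_add_distrib, Finset.sum_sub_distrib, ← Finset.mul_sum,
      Finset.sum_const, Finset.card_univ, Fintype.card_fin, hx1, hx2]
    field_simp
    rw [nsmul_eq_mul, ← hn_def]; linear_combination (s^2*(n*n⁻¹+1)) * mul_inv_cancel₀ hn'
  have hQy : ∑ i, (A.mulVec y) i * y i = (∑ i, (A.mulVec x) i * x i) - s^2*(D:ℝ)/n := by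
    have : ∀ i, (A.mulVec y) i * y i =
        (A.mulVec x) i * x i - (s/n)*(A.mulVec x) i - (s/n*(D:ℝ))*x i + (s/n)*(s/n*(D:ℝ)) := by
      intro i; rw [hAy]; simp only [hy_def]; ring
    rw [Finset.sum_congr rfl fun i _ => this i]
    rw [Finset.sum_add_distrib, Finset.sum_sub_distrib, Finset.sum_sub_distrib,
      ← Finset.mul_sum, ← Finset.mul_sum, Finset.sum_const, Finset.card_univ,
      Fintype.card_fin, hx1, hsumAx]
    field_simp
    rw [nsmul_eq_mul, ← hn_def]; linear_combination (s^2*(D:ℝ)*(n*n⁻¹+1)) * mul_inv_cancel₀ hn'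
  rw [hyy, hQy, hQ, count_lemma G S, ← hE_def] at hray
  -- conclude
  rw [ge_iff_le, ← sub_nonneg]
  have hrw : E - ((D:ℝ) / (2 * n) * s ^ 2 + lam / (2 * n) * s * (n - s)) =
      ((2 * E - s^2*(D:ℝ)/n) - lam * (s - s^2/n)) / 2 := by
    field_simp
    ring
  rw [hrw]
  have : (0:ℝ) ≤ (2 * E - s^2*(D:ℝ)/n) - lam * (s - s^2/n) := by linarith
  linarith
end

section
/- Let m be a positive integer and G a graph with at least m vertices. Let S be a set of m vertices of G of largest degree (i.e., every vertex outside S has degree at most the degree of every vertex in S). If the graph G − S (obtained by deleting S) has at least m² edges, then G contains a subgraph H with maximum degree Δ(H) ≤ m and at least m²/2 edges. -/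
private lemma sum_gauss_bound (m : ℕ) : m ^ 2 ≤ 2 * ∑ i ∈ Finset.range m, (m - i) := by
  induction m with
  | zero => simp
  | succ n ih =>
    have h : ∑ i ∈ Finset.range (n+1), (n+1 - i)
        = (∑ i ∈ Finset.range n, (n - i)) + (n + 1) := by
      rw [Finset.sum_range_succ']
      congr 1
      exact Finset.sum_congr rfl (by intros; omega)
    have e : (n+1)^2 = n^2 + 2*n + 1 := by ring
    omega

private lemma final_step (m n : ℕ) (h : m ^ 2 ≤ 2 * n) : (n : ℝ) ≥ (m : ℝ) ^ 2 / 2 := by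
  rw [ge_iff_le, div_le_iff₀ (by norm_num)]
  exact_mod_cast (by omega : m ^ 2 ≤ n * 2)

/-- Let `G` be a graph, `S` a set of `m` vertices of largest degree, and suppose
`G − S` has at least `m²` edges. Then `G` has a subgraph `H` with maximum
degree at most `m` and at least `m²/2` edges. -/
theorem exists_bounded_degree_subgraph {V : Type*} [Fintype V]
    (G : SimpleGraph V) (m : ℕ) (hm : 0 < m)
    (S : Finset V) (hScard : S.card = m)
    (hSdeg : ∀ v ∉ S, ∀ u ∈ S, (G.neighborSet v).ncard ≤ (G.neighborSet u).ncard)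
    (hedges : m ^ 2 ≤ {e ∈ G.edgeSet | ∀ v ∈ e, v ∉ (S : Set V)}.ncard) :
    ∃ H : SimpleGraph V, H ≤ G ∧ (∀ v, (H.neighborSet v).ncard ≤ m) ∧
      (H.edgeSet.ncard : ℝ) ≥ (m : ℝ) ^ 2 / 2 := by
  classical
  by_cases hcase : ∃ u ∈ S, (G.neighborSet u).ncard ≤ m
  · -- Case 1: some top vertex has degree ≤ m, so all vertices outside S do too.
    obtain ⟨u0, hu0S, hu0⟩ := hcase
    set H : SimpleGraph V :=
      { Adj := fun a b => G.Adj a b ∧ a ∉ S ∧ b ∉ S,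
        symm := ⟨fun a b h => ⟨h.1.symm, h.2.2, h.2.1⟩⟩,
        loopless := ⟨fun a h => G.loopless.irrefl a h.1⟩ } with hH
    refine ⟨H, ?_, ?_, ?_⟩
    · intro a b h; exact h.1
    · intro v
      by_cases hv : v ∈ S
      · have he : H.neighborSet v = ∅ := by
          ext b
          simp only [SimpleGraph.mem_neighborSet, Set.mem_empty_iff_false, iff_false]
          rintro ⟨-, h, -⟩
          exact h hv
        rw [he]; simp
      · have hsub : H.neighborSet v ⊆ G.neighborSet v := by
          rintro b ⟨h, -, -⟩; exact h
        calc (H.neighborSet v).ncard ≤ (G.neighborSet v).ncard :=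
              Set.ncard_le_ncard hsub (Set.toFinite _)
          _ ≤ (G.neighborSet u0).ncard := hSdeg v hv u0 hu0S
          _ ≤ m := hu0
    · apply final_step
      have heq : {e ∈ G.edgeSet | ∀ v ∈ e, v ∉ (S : Set V)} ⊆ H.edgeSet := by
        intro e he
        induction e using Sym2.ind with
        | _ a b =>
          obtain ⟨h1, h2⟩ := he
          exact (SimpleGraph.mem_edgeSet _).mpr
            ⟨h1, h2 a (Sym2.mem_mk_left a b), h2 b (Sym2.mem_mk_right a b)⟩
      have := Set.ncard_le_ncard heq (Set.toFinite _)
      omega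
  · -- Case 2: all vertices in S have degree ≥ m + 1.
    push_neg at hcase
    set u : Fin m → V := fun i => (S.equivFin.symm (Fin.cast hScard.symm i) : V) with hu
    have hu_inj : Function.Injective u := by
      intro i j h
      have := S.equivFin.symm.injective (Subtype.ext h)
      simpa [Fin.ext_iff] using this
    have huS : ∀ i, u i ∈ S := fun i => (S.equivFin.symm _).2
    have hdeg : ∀ i, m + 1 ≤ (G.neighborSet (u i)).ncard := fun i =>
      hcase (u i) (huS i)
    have hex : ∀ i : Fin m, ∃ T : Finset V,
        T ⊆ ((G.neighborSet (u i)).toFinite.toFinset \ (Finset.Iio i).image u)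
        ∧ T.card = m - i := by
      intro i
      apply Finset.exists_subset_card_eq
      have h1 : ((Finset.Iio i).image u).card ≤ i := by
        calc ((Finset.Iio i).image u).card ≤ (Finset.Iio i).card := Finset.card_image_le
          _ = i := Fin.card_Iio i
      have h2 : (G.neighborSet (u i)).toFinite.toFinset.card = (G.neighborSet (u i)).ncard :=
        (Set.ncard_eq_toFinset_card _ _).symm
      have h3 := Finset.le_card_sdiff ((Finset.Iio i).image u)
        (G.neighborSet (u i)).toFinite.toFinset
      have h4 := hdeg i
      omega
    choose T hTsub hTcard using hex
    have hTnb : ∀ i, ∀ b ∈ T i, G.Adj (u i) b := by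
      intro i b hb
      have := (Finset.mem_sdiff.mp (hTsub i hb)).1
      exact (Set.Finite.mem_toFinset _).mp this
    have hTmem : ∀ i j, u i ∈ T j → j < i := by
      intro i j h
      have h2 := (Finset.mem_sdiff.mp (hTsub j h)).2
      have hne : j ≠ i := by
        rintro rfl
        exact G.loopless.irrefl _ (hTnb j _ h)
      by_contra hlt
      apply h2
      apply Finset.mem_image_of_mem
      simp only [Finset.mem_Iio]
      rcases lt_or_eq_of_le (not_lt.mp hlt) with h' | h'
      · exact h'
      · exact absurd h'.symm hne
    have hsymm : Symmetric (fun a b => ∃ i, (a = u i ∧ b ∈ T i) ∨ (b = u i ∧ a ∈ T i)) := by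
      rintro a b ⟨i, h | h⟩
      exacts [⟨i, Or.inr h⟩, ⟨i, Or.inl h⟩]
    have hirr : Irreflexive (fun a b => ∃ i, (a = u i ∧ b ∈ T i) ∨ (b = u i ∧ a ∈ T i)) := by
      rintro a ⟨i, ⟨rfl, h⟩ | ⟨rfl, h⟩⟩ <;> exact G.loopless.irrefl _ (hTnb i _ h)
    set H : SimpleGraph V :=
      { Adj := fun a b => ∃ i, (a = u i ∧ b ∈ T i) ∨ (b = u i ∧ a ∈ T i),
        symm := ⟨fun a b h => hsymm h⟩,
        loopless := ⟨hirr⟩ } with hH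
    refine ⟨H, ?_, ?_, ?_⟩
    · rintro a b ⟨i, ⟨rfl, h⟩ | ⟨rfl, h⟩⟩
      · exact hTnb i b h
      · exact (hTnb i a h).symm
    · intro v
      by_cases hv : ∃ i₀, v = u i₀
      · obtain ⟨i₀, rfl⟩ := hv
        have hsub : H.neighborSet (u i₀) ⊆ ↑(T i₀ ∪ (Finset.Iio i₀).image u) := by
          rintro b ⟨i, ⟨he, hb⟩ | ⟨rfl, hb⟩⟩
          · have : i = i₀ := (hu_inj he).symm
            subst this
            exact Finset.mem_coe.mpr (Finset.mem_union_left _ hb)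
          · have hlt : i < i₀ := hTmem i₀ i hb
            exact Finset.mem_coe.mpr (Finset.mem_union_right _
              (Finset.mem_image_of_mem u (Finset.mem_Iio.mpr hlt)))
        calc (H.neighborSet (u i₀)).ncard
            ≤ (↑(T i₀ ∪ (Finset.Iio i₀).image u) : Set V).ncard :=
              Set.ncard_le_ncard hsub (Set.toFinite _)
          _ = (T i₀ ∪ (Finset.Iio i₀).image u).card := Set.ncard_coe_finset _
          _ ≤ (T i₀).card + ((Finset.Iio i₀).image u).card := Finset.card_union_le _ _
          _ ≤ m := by
              have h5 := Finset.card_image_le (f := u) (s := Finset.Iio i₀)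
              rw [hTcard i₀]
              simp only [Fin.card_Iio] at h5
              omega
      · push_neg at hv
        have hsub : H.neighborSet v ⊆ ↑(Finset.univ.image u) := by
          rintro b ⟨i, ⟨he, hb⟩ | ⟨rfl, hb⟩⟩
          · exact absurd he (hv i)
          · exact Finset.mem_coe.mpr (Finset.mem_image_of_mem u (Finset.mem_univ i))
        calc (H.neighborSet v).ncard ≤ (↑(Finset.univ.image u) : Set V).ncard :=
              Set.ncard_le_ncard hsub (Set.toFinite _)
          _ = (Finset.univ.image u).card := Set.ncard_coe_finset _
          _ ≤ (Finset.univ : Finset (Fin m)).card := Finset.card_image_le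
          _ = m := by simp
    · apply final_step
      set F : Finset (Sym2 V) :=
        Finset.univ.biUnion (fun i : Fin m => (T i).image (fun b => s(u i, b))) with hF
      have hdisj : ∀ i ∈ (Finset.univ : Finset (Fin m)), ∀ j ∈ Finset.univ, i ≠ j →
          Disjoint ((T i).image (fun b => s(u i, b))) ((T j).image (fun b => s(u j, b))) := by
        intro i _ j _ hij
        rw [Finset.disjoint_left]
        rintro e he he'
        obtain ⟨b, hb, rfl⟩ := Finset.mem_image.mp he
        obtain ⟨c, hc, hbc⟩ := Finset.mem_image.mp he'
        rw [Sym2.eq_iff] at hbc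
        rcases hbc with ⟨h1, -⟩ | ⟨h1, h2⟩
        · exact hij (hu_inj h1).symm
        · have h3 : i < j := hTmem j i (by rwa [← h1] at hb)
          have h4 : j < i := hTmem i j (by rwa [h2] at hc)
          exact absurd h4 (lt_asymm h3)
      have hcardF : F.card = ∑ i : Fin m, (m - (i : ℕ)) := by
        rw [hF, Finset.card_biUnion hdisj]
        apply Finset.sum_congr rfl
        intro i _
        rw [Finset.card_image_of_injOn, hTcard i]
        intro b hb c hc h
        rw [Sym2.eq_iff] at h
        rcases h with ⟨-, h⟩ | ⟨h1, h2⟩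
        · exact h
        · exact absurd (hTmem i i (by rwa [← h1] at hc)) (lt_irrefl i)
      have hFsub : (↑F : Set (Sym2 V)) ⊆ H.edgeSet := by
        intro e he
        obtain ⟨i, -, he⟩ := Finset.mem_biUnion.mp he
        obtain ⟨b, hb, rfl⟩ := Finset.mem_image.mp he
        exact (SimpleGraph.mem_edgeSet _).mpr ⟨i, Or.inl ⟨rfl, hb⟩⟩
      have hge : F.card ≤ H.edgeSet.ncard := by
        rw [← Set.ncard_coe_finset F]
        exact Set.ncard_le_ncard hFsub (Set.toFinite _)
      have hsum : m ^ 2 ≤ 2 * F.card := by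
        rw [hcardF, Fin.sum_univ_eq_sum_range (fun i => m - i)]
        exact sum_gauss_bound m
      omega
end
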